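/- The sequence g_n = 2*(4n+1)!/((n+1)!*(3n+2)!) satisfies the asymptotic equivalence g_n ~ (1/16)*sqrt(3/(2π)) * n^(-5/2) * (256/27)^(n+1) as n → ∞; that is, the ratio of g_n to (1/16)*sqrt(3/(2π)) * n^(-5/2) * (256/27)^(n+1) tends to 1. -/

import Mathlib

open Filter Real Topology

/-- `gseq n` is the number `g_n = 2·(4n+1)!/((n+1)!·(3n+2)!)` of rooted 3-connected
planar triangulations with `2n+2` faces (as a real number), with `g_0 = 0`. -/
noncomputable def gseq (n : ℕ) : ℝ :=
  if n = 0 then 0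
  else 2 * (Nat.factorial (4 * n + 1)) / ((Nat.factorial (n + 1)) * (Nat.factorial (3 * n + 2)))

private lemma fact_eq' (m : ℕ) (hm : m ≠ 0) :
    (Nat.factorial m : ℝ) =
      Stirling.stirlingSeq m * (Real.sqrt 2 * Real.sqrt m * ((m:ℝ) ^ m / Real.exp 1 ^ m)) := by
  have h0 : (0:ℝ) < m := by exact_mod_cast Nat.pos_of_ne_zero hm
  rw [Stirling.stirlingSeq, Real.sqrt_mul (by norm_num : (0:ℝ) ≤ 2), div_pow]
  field_simp

private lemma hhelper' (c : ℕ) :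
    Tendsto (fun m : ℕ => (((m:ℝ) + c) / m) ^ (m + c)) atTop (𝓝 (Real.exp c)) := by
  have h1 := Real.tendsto_one_add_div_pow_exp (c:ℝ)
  have h2 : Tendsto (fun m : ℕ => (1 + (c:ℝ) / m)) atTop (𝓝 1) := by
    have := tendsto_const_nhds.div_atTop (f := fun m : ℕ => (c:ℝ)) (l := atTop)
      tendsto_natCast_atTop_atTop
    simpa using this.const_add 1
  have h3 := h1.mul (h2.pow c)
  rw [one_pow, mul_one] at h3
  refine h3.congr' ?_
  filter_upwards [eventually_ne_atTop 0] with m hm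
  have hm' : (m:ℝ) ≠ 0 := Nat.cast_ne_zero.mpr hm
  rw [← pow_add]
  congr 1
  field_simp

private lemma sqrt_ratio' (a b : ℝ) :
    Tendsto (fun n : ℕ => Real.sqrt ((a * (n:ℝ) + b) / n)) atTop (𝓝 (Real.sqrt a)) := by
  have h : Tendsto (fun n : ℕ => (a * (n:ℝ) + b) / n) atTop (𝓝 a) := by
    have hb : Tendsto (fun n : ℕ => b / (n:ℝ)) atTop (𝓝 0) :=
      tendsto_const_nhds.div_atTop tendsto_natCast_atTop_atTop
    have := (tendsto_const_nhds (x := a)).add hb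
    rw [add_zero] at this
    refine this.congr' ?_
    filter_upwards [eventually_ne_atTop 0] with n hn
    have hn' : (n:ℝ) ≠ 0 := Nat.cast_ne_zero.mpr hn
    field_simp
  exact (Real.continuous_sqrt.tendsto a).comp h

private lemma hA' : Tendsto (fun n : ℕ => ((4*(n:ℝ)+1)/(4*(n:ℝ)))^(4*n+1)) atTop
    (𝓝 (Real.exp 1)) := by
  have h := (hhelper' 1).comp
    (tendsto_atTop_mono (fun n => by simp only [id_eq]; omega : ∀ n : ℕ, id n ≤ 4*n) tendsto_id)
  simp only [Nat.cast_one] at h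
  refine h.congr fun n => ?_
  simp only [Function.comp]
  push_cast
  norm_num

private lemma hB' : Tendsto (fun n : ℕ => (((n:ℝ)+1)/(n:ℝ))^(n+1)) atTop (𝓝 (Real.exp 1)) := by
  have h := hhelper' 1
  simp only [Nat.cast_one] at h
  exact h

private lemma hC' : Tendsto (fun n : ℕ => ((3*(n:ℝ)+2)/(3*(n:ℝ)))^(3*n+2)) atTop
    (𝓝 (Real.exp 2)) := by
  have h := (hhelper' 2).comp
    (tendsto_atTop_mono (fun n => by simp only [id_eq]; omega : ∀ n : ℕ, id n ≤ 3*n) tendsto_id)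
  simp only [Nat.cast_ofNat] at h
  refine h.congr fun n => ?_
  simp only [Function.comp]
  push_cast
  norm_num

/-- `g_n ~ (1/16)·√(3/(2π))·n^(-5/2)·(256/27)^(n+1)` as `n → ∞`. -/
theorem stmt_0 :
    Tendsto
      (fun n : ℕ =>
        gseq n /
          ((1 / 16) * Real.sqrt (3 / (2 * Real.pi)) * (n : ℝ) ^ (-(5 / 2 : ℝ)) *
            (256 / 27 : ℝ) ^ (n + 1)))
      atTop (𝓝 1) := by
  have hπ := Real.pi_pos
  -- Stirling sequence limits
  have hs4 : Tendsto (fun n : ℕ => Stirling.stirlingSeq (4*n+1)) atTop (𝓝 (√π)) :=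
    Stirling.tendsto_stirlingSeq_sqrt_pi.comp
      (tendsto_atTop_mono (fun n => by simp only [id_eq]; omega) tendsto_id)
  have hsb : Tendsto (fun n : ℕ => Stirling.stirlingSeq (n+1)) atTop (𝓝 (√π)) :=
    Stirling.tendsto_stirlingSeq_sqrt_pi.comp
      (tendsto_atTop_mono (fun n => by simp only [id_eq]; omega) tendsto_id)
  have hsc : Tendsto (fun n : ℕ => Stirling.stirlingSeq (3*n+2)) atTop (𝓝 (√π)) :=
    Stirling.tendsto_stirlingSeq_sqrt_pi.comp
      (tendsto_atTop_mono (fun n => by simp only [id_eq]; omega) tendsto_id)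
  have hSpart := hs4.div (hsb.mul hsc) (by positivity)
  have hApart := hA'.div (hB'.mul hC') (by positivity)
  have hSqpart := (sqrt_ratio' 4 1).div
    (((tendsto_const_nhds (x := Real.sqrt 2)).mul (sqrt_ratio' 1 1)).mul (sqrt_ratio' 3 2))
    (by positivity)
  have hfull := ((hSpart.mul hApart).mul hSqpart).mul
    (tendsto_const_nhds (x := (3/2) * Real.exp 2 / Real.sqrt (3/(2*π))))
  have hV : √π / (√π * √π) * (Real.exp 1 / (Real.exp 1 * Real.exp 2)) *
      (√(4:ℝ) / (√2 * √1 * √3)) * ((3/2) * Real.exp 2 / √(3/(2*π))) = 1 := by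
    have h32 : Real.sqrt (3/(2*π)) = √3 / (√2 * √π) := by
      rw [Real.sqrt_div (by norm_num), Real.sqrt_mul (by norm_num)]
    rw [h32, Real.sqrt_one, show (4:ℝ) = 2^2 by norm_num, Real.sqrt_sq (by norm_num)]
    have e2 : (√2:ℝ) * √2 = 2 := Real.mul_self_sqrt (by norm_num)
    have e3 : (√3:ℝ) * √3 = 3 := Real.mul_self_sqrt (by norm_num)
    have eπ : (√π:ℝ) * √π = π := Real.mul_self_sqrt hπ.le
    have h2 : (√2:ℝ) ≠ 0 := by positivity
    have h3 : (√3:ℝ) ≠ 0 := by positivity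
    have hsπ : (√π:ℝ) ≠ 0 := by positivity
    have he1 : Real.exp 1 ≠ 0 := Real.exp_ne_zero 1
    have he2 : Real.exp 2 ≠ 0 := Real.exp_ne_zero 2
    field_simp
    linear_combination -e3
  rw [hV] at hfull
  refine hfull.congr' ?_
  filter_upwards [eventually_ge_atTop 1] with n hn
  simp only [Pi.div_apply, Pi.mul_apply]
  have hn0 : n ≠ 0 := by omega
  have hx : (0:ℝ) < (n:ℝ) := by exact_mod_cast Nat.pos_of_ne_zero hn0
  have hxne : (n:ℝ) ≠ 0 := hx.ne'
  simp only [gseq, if_neg hn0]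
  rw [fact_eq' (4*n+1) (by omega), fact_eq' (n+1) (by omega), fact_eq' (3*n+2) (by omega)]
  push_cast
  set x : ℝ := (n:ℝ) with hxdef
  -- rewrite the rpow and the power of 256/27
  have hx52 : x ^ (-(5/2 : ℝ)) = (x^2 * Real.sqrt x)⁻¹ := by
    rw [Real.rpow_neg hx.le]
    congr 1
    rw [show (5/2:ℝ) = ((2:ℕ):ℝ) + (1/2:ℝ) by norm_num, Real.rpow_add hx,
      Real.rpow_natCast, Real.sqrt_eq_rpow]
  have h256 : ((256:ℝ)/27)^(n+1) = (4:ℝ)^(4*n+4)/(3:ℝ)^(3*n+3) := by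
    rw [div_pow, show (256:ℝ) = 4^4 by norm_num, show (27:ℝ) = 3^3 by norm_num,
      ← pow_mul, ← pow_mul, show 4*(n+1) = 4*n+4 from by ring, show 3*(n+1) = 3*n+3 from by ring]
  rw [hx52, h256]
  -- rewrite the square roots of quotients
  have hq1 : Real.sqrt ((4*x+1)/x) = Real.sqrt (4*x+1) / Real.sqrt x :=
    Real.sqrt_div (by positivity) x
  have hq2 : Real.sqrt ((1*x+1)/x) = Real.sqrt (x+1) / Real.sqrt x := by
    rw [one_mul, Real.sqrt_div (by positivity) x]
  have hq3 : Real.sqrt ((3*x+2)/x) = Real.sqrt (3*x+2) / Real.sqrt x :=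
    Real.sqrt_div (by positivity) x
  rw [hq1, hq2, hq3, div_pow, div_pow, div_pow, mul_pow, mul_pow]
  set E : ℝ := Real.exp 1 with hEdef
  have hexp2 : Real.exp 2 = E ^ 2 := by
    rw [hEdef, sq, ← Real.exp_add]; norm_num
  rw [hexp2]
  obtain ⟨y, hy0, hy⟩ : ∃ y : ℝ, 0 < y ∧ y ^ 2 = x :=
    ⟨Real.sqrt x, Real.sqrt_pos.mpr hx, Real.sq_sqrt hx.le⟩
  have hsq : Real.sqrt x = y := by rw [← hy, Real.sqrt_sq hy0.le]
  rw [hsq, ← hy]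
  -- nonvanishing facts
  have hs4p : (0:ℝ) < Stirling.stirlingSeq (4*n+1) := Stirling.stirlingSeq'_pos (4*n)
  have hsbp : (0:ℝ) < Stirling.stirlingSeq (n+1) := Stirling.stirlingSeq'_pos n
  have hscp : (0:ℝ) < Stirling.stirlingSeq (3*n+2) := by
    have := Stirling.stirlingSeq'_pos (3*n+1)
    simpa [show 3*n+1+1 = 3*n+2 from by omega] using this
  have hyne : y ≠ 0 := hy0.ne'
  have hs2 : Real.sqrt 2 ≠ 0 := by positivity
  have hsa : Real.sqrt (4*y^2+1) ≠ 0 := by positivity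
  have hsb' : Real.sqrt (y^2+1) ≠ 0 := by positivity
  have hsc' : Real.sqrt (3*y^2+2) ≠ 0 := by positivity
  have hsp : Real.sqrt (3/(2*π)) ≠ 0 := by positivity
  have he : E ≠ 0 := by rw [hEdef]; exact Real.exp_ne_zero 1
  field_simp
  ring
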